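/- Let H be a Hopf algebra with invertible antipode and A ⊂ H a nonzero subalgebra (not assumed unital) satisfying Δ(A) ⊂ H ⊗ A. If A admits a left unit or a right unit, then the unit 1_H of H belongs to A. -/

import Mathlib

open scoped TensorProduct
open Coalgebra HopfAlgebra

section AntipodeAux

variable {k H : Type*} [CommSemiring k] [Semiring H] [HopfAlgebra k H]

private lemma myRepr_counit_left {ι : Type*} (a : H) (r : Coalgebra.Repr k a ι) :
    ∑ i ∈ r.index, Coalgebra.counit (R := k) (r.left i) • r.right i = a := by
  have h := congrArg (TensorProduct.lid k H) (Coalgebra.sum_counit_tmul_eq r)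
  simp only [map_sum, TensorProduct.lid_tmul, one_smul] at h
  exact h

private lemma myRepr_counit_right {ι : Type*} (a : H) (r : Coalgebra.Repr k a ι) :
    ∑ i ∈ r.index, Coalgebra.counit (R := k) (r.right i) • r.left i = a := by
  have h := congrArg (TensorProduct.rid k H) (Coalgebra.sum_tmul_counit_eq r)
  simp only [map_sum, TensorProduct.rid_tmul, one_smul] at h
  exact h

/-- The product of two representations is a representation of the product. -/
private noncomputable def myReprMul {ι κ : Type*} {a b : H} (ra : Coalgebra.Repr k a ι)
    (rb : Coalgebra.Repr k b κ) : Coalgebra.Repr k (a * b) (ι × κ) where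
  index := ra.index ×ˢ rb.index
  left := fun p => ra.left p.1 * rb.left p.2
  right := fun p => ra.right p.1 * rb.right p.2
  eq := by
    rw [Finset.sum_product, Bialgebra.comul_mul, ← ra.eq, ← rb.eq, Finset.sum_mul_sum]
    simp [Algebra.TensorProduct.tmul_mul_tmul]

/-- `∑ S(a₁) a₂ ⊗ a₃ = 1 ⊗ a`. -/
private lemma myL {ι κ : Type*} (a : H) (r : Coalgebra.Repr k a ι)
    (rr : ∀ i : ι, Coalgebra.Repr k (r.right i) κ) :
    ∑ i ∈ r.index, ∑ j ∈ (rr i).index,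
      (antipode (R := k) (r.left i) * (rr i).left j) ⊗ₜ[k] (rr i).right j = (1 : H) ⊗ₜ[k] a := by
  classical
  set lr : ∀ i : ι, Coalgebra.Repr k (r.left i) (H × H) := fun i => Coalgebra.Repr.arbitrary k (r.left i)
  have h := Coalgebra.sum_tmul_tmul_eq r lr rr
  set ϑ : H ⊗[k] (H ⊗[k] H) →ₗ[k] H ⊗[k] H :=
    (LinearMap.rTensor H (LinearMap.mul' k H ∘ₗ LinearMap.rTensor H (antipode (R := k)))) ∘ₗ
      (TensorProduct.assoc k H H H).symm.toLinearMap with hϑ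
  have h2 := congrArg ϑ h
  simp only [map_sum, hϑ, LinearMap.comp_apply, LinearEquiv.coe_coe,
    TensorProduct.assoc_symm_tmul, LinearMap.rTensor_tmul, LinearMap.mul'_apply] at h2
  rw [← h2]
  calc ∑ i ∈ r.index, ∑ j ∈ (lr i).index,
      (antipode (R := k) ((lr i).left j) * (lr i).right j) ⊗ₜ[k] r.right i
      = ∑ i ∈ r.index, (algebraMap k H (counit (R := k) (r.left i))) ⊗ₜ[k] r.right i := by
        refine Finset.sum_congr rfl fun i _ => ?_
        rw [← TensorProduct.sum_tmul, HopfAlgebra.sum_antipode_mul_eq_algebraMap_counit (lr i)]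
    _ = (1 : H) ⊗ₜ[k] a := by
        simp only [Algebra.algebraMap_eq_smul_one, TensorProduct.smul_tmul]
        rw [← TensorProduct.tmul_sum, myRepr_counit_left]

private lemma my_antipode_one : antipode (R := k) (1 : H) = 1 := by
  have h := HopfAlgebra.mul_antipode_rTensor_comul_apply (R := k) (A := H) 1
  rwa [Bialgebra.comul_one, Algebra.TensorProduct.one_def, LinearMap.rTensor_tmul,
    LinearMap.mul'_apply, mul_one, Bialgebra.counit_one, (algebraMap k H).map_one] at h

/-- The antipode is anti-multiplicative. -/
private lemma my_antipode_mul (a b : H) :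
    antipode (R := k) (a * b) = antipode (R := k) b * antipode (R := k) a := by
  classical
  set ra := Coalgebra.Repr.arbitrary k a
  set rb := Coalgebra.Repr.arbitrary k b
  set rra : ∀ i : H × H, Coalgebra.Repr k (ra.right i) (H × H) := fun i => Coalgebra.Repr.arbitrary k _
  set rrb : ∀ j : H × H, Coalgebra.Repr k (rb.right j) (H × H) := fun j => Coalgebra.Repr.arbitrary k _
  set S : H →ₗ[k] H := antipode (R := k) with hSdef
  set X : H := ∑ j ∈ rb.index, ∑ l ∈ (rrb j).index, ∑ i ∈ ra.index, ∑ m ∈ (rra i).index,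
      (S (rb.left j) * ((S (ra.left i) * (rra i).left m) * (rrb j).left l)) *
        S ((rra i).right m * (rrb j).right l) with hX
  have way1 : X = S (a * b) := by
    have step : ∀ j ∈ rb.index, ∀ l ∈ (rrb j).index,
        ∑ i ∈ ra.index, ∑ m ∈ (rra i).index,
          (S (rb.left j) * ((S (ra.left i) * (rra i).left m) * (rrb j).left l)) *
            S ((rra i).right m * (rrb j).right l)
          = (S (rb.left j) * (rrb j).left l) * S (a * (rrb j).right l) := by
      intro j _ l _
      set φ : H ⊗[k] H →ₗ[k] H := LinearMap.mul' k H ∘ₗ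
        TensorProduct.map
          ((LinearMap.mulLeft k (S (rb.left j))) ∘ₗ (LinearMap.mulRight k ((rrb j).left l)))
          (S ∘ₗ (LinearMap.mulRight k ((rrb j).right l))) with hφ
      have h1 := congrArg φ (myL a ra rra)
      simp only [map_sum, hφ, LinearMap.comp_apply, TensorProduct.map_tmul,
        LinearMap.mul'_apply, LinearMap.mulLeft_apply, LinearMap.mulRight_apply,
        one_mul] at h1
      exact h1
    calc X = ∑ j ∈ rb.index, ∑ l ∈ (rrb j).index,
        (S (rb.left j) * (rrb j).left l) * S (a * (rrb j).right l) := by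
          rw [hX]
          exact Finset.sum_congr rfl fun j hj => Finset.sum_congr rfl fun l hl => step j hj l hl
      _ = S (a * b) := by
          set ψ : H ⊗[k] H →ₗ[k] H := LinearMap.mul' k H ∘ₗ
            TensorProduct.map LinearMap.id (S ∘ₗ (LinearMap.mulLeft k a)) with hψ
          have h2 := congrArg ψ (myL b rb rrb)
          simp only [map_sum, hψ, LinearMap.comp_apply, TensorProduct.map_tmul,
            LinearMap.mul'_apply, LinearMap.mulLeft_apply, LinearMap.id_coe, id_eq,
            one_mul] at h2
          exact h2
  have way2 : X = S b * S a := by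
    have inner : ∀ i ∈ ra.index, ∀ j ∈ rb.index,
        ∑ m ∈ (rra i).index, ∑ l ∈ (rrb j).index,
          ((rra i).left m * (rrb j).left l) * S ((rra i).right m * (rrb j).right l)
          = (counit (R := k) (ra.right i) * counit (R := k) (rb.right j)) • (1 : H) := by
      intro i _ j _
      have h3 := HopfAlgebra.sum_mul_antipode_eq_smul (R := k) (myReprMul (rra i) (rrb j))
      have h4 : ∑ p ∈ (rra i).index ×ˢ (rrb j).index,
          ((rra i).left p.1 * (rrb j).left p.2) *
            antipode (R := k) ((rra i).right p.1 * (rrb j).right p.2)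
          = counit (R := k) ((ra.right i) * (rb.right j)) • (1 : H) := h3
      rw [Finset.sum_product] at h4
      rw [h4, Bialgebra.counit_mul]
    calc X = ∑ j ∈ rb.index, ∑ i ∈ ra.index, (S (rb.left j) * S (ra.left i)) *
            ∑ m ∈ (rra i).index, ∑ l ∈ (rrb j).index,
              ((rra i).left m * (rrb j).left l) * S ((rra i).right m * (rrb j).right l) := by
          rw [hX]
          refine Finset.sum_congr rfl fun j _ => ?_
          rw [Finset.sum_comm]
          refine Finset.sum_congr rfl fun i _ => ?_
          rw [Finset.mul_sum]
          rw [Finset.sum_comm]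
          refine Finset.sum_congr rfl fun m _ => ?_
          rw [Finset.mul_sum]
          refine Finset.sum_congr rfl fun l _ => ?_
          noncomm_ring
      _ = ∑ j ∈ rb.index, ∑ i ∈ ra.index,
            (counit (R := k) (rb.right j) • S (rb.left j)) *
              (counit (R := k) (ra.right i) • S (ra.left i)) := by
          refine Finset.sum_congr rfl fun j hj => Finset.sum_congr rfl fun i hi => ?_
          rw [inner i hi j hj, mul_smul_comm, mul_one, smul_mul_assoc, mul_smul_comm,
            smul_smul, mul_comm]
      _ = S b * S a := by
          rw [← Finset.sum_mul_sum]
          congr 1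
          · calc ∑ j ∈ rb.index, counit (R := k) (rb.right j) • S (rb.left j)
                = S (∑ j ∈ rb.index, counit (R := k) (rb.right j) • rb.left j) := by
                  rw [map_sum]; simp only [map_smul]
              _ = S b := by rw [myRepr_counit_right]
          · calc ∑ i ∈ ra.index, counit (R := k) (ra.right i) • S (ra.left i)
                = S (∑ i ∈ ra.index, counit (R := k) (ra.right i) • ra.left i) := by
                  rw [map_sum]; simp only [map_smul]
              _ = S a := by rw [myRepr_counit_right]
  rw [← way1, way2]

end AntipodeAux

section SpanAux

variable {k H : Type*} [Field k] [Ring H] [HopfAlgebra k H]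

private lemma span_apply_eq (S : NonUnitalSubalgebra k H) (f g : H ⊗[k] H →ₗ[k] H)
    (hfg : ∀ (x y : H), y ∈ S → f (x ⊗ₜ[k] y) = g (x ⊗ₜ[k] y))
    {t : H ⊗[k] H}
    (ht : t ∈ Submodule.span k {t : H ⊗[k] H | ∃ x y : H, y ∈ S ∧ t = x ⊗ₜ[k] y}) :
    f t = g t := by
  induction ht using Submodule.span_induction with
  | mem t h => obtain ⟨x, y, hy, rfl⟩ := h; exact hfg x y hy
  | zero => simp
  | add u v _ _ hu hv => simp [map_add, hu, hv]
  | smul c u _ hu => simp [map_smul, hu]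

end SpanAux

/-- If a nonzero (not necessarily unital) subalgebra `S` of a Hopf algebra `H`
satisfies `Δ(S) ⊆ H ⊗ S` and admits a left or a right unit, then `1_H ∈ S`. -/
theorem one_mem_of_coideal_subalgebra_with_one_sided_unit
    (k H : Type*) [Field k] [Ring H] [HopfAlgebra k H]
    (hS : Function.Bijective (HopfAlgebra.antipode (R := k) (A := H)))
    (S : NonUnitalSubalgebra k H) (hne : ∃ s ∈ S, s ≠ (0 : H))
    (hcoid : ∀ a ∈ S, Coalgebra.comul (R := k) a ∈
      Submodule.span k {t : H ⊗[k] H | ∃ x y : H, y ∈ S ∧ t = x ⊗ₜ[k] y})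
    (hunit : (∃ y ∈ S, ∀ a ∈ S, y * a = a) ∨ (∃ y ∈ S, ∀ a ∈ S, a * y = a)) :
    (1 : H) ∈ S := by
  classical
  -- there is an element of S with nonzero counit
  have hex : ∃ a ∈ S, Coalgebra.counit (R := k) a ≠ 0 := by
    by_contra hcon
    push_neg at hcon
    obtain ⟨s, hs, hs0⟩ := hne
    apply hs0
    set χ : H ⊗[k] H →ₗ[k] H :=
      (TensorProduct.rid k H).toLinearMap ∘ₗ
        LinearMap.lTensor H (Coalgebra.counit (R := k)) with hχ
    have h0 : χ (Coalgebra.comul (R := k) s) = χ 0 := by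
      refine span_apply_eq S χ 0 ?_ (by simpa using hcoid s hs)
      · intro x y hy
        simp [hχ, hcon y hy]
    have h1 : χ (Coalgebra.comul (R := k) s) = s := by
      rw [hχ]
      simp only [LinearMap.comp_apply, Coalgebra.lTensor_counit_comul,
        LinearEquiv.coe_toLinearMap, TensorProduct.rid_tmul, one_smul]
    rw [h0, map_zero] at h1
    exact h1.symm
  obtain ⟨a, haS, ha⟩ := hex
  have cancel : ∀ u v : H, Coalgebra.counit (R := k) a • u = Coalgebra.counit (R := k) a • v →
      u = v := by
    intro u v h
    have := congrArg (fun w => (Coalgebra.counit (R := k) a)⁻¹ • w) h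
    simpa [inv_smul_smul₀ ha] using this
  rcases hunit with ⟨y, hyS, hy⟩ | ⟨y, hyS, hy⟩
  · -- left unit case
    set ψ : H ⊗[k] H →ₗ[k] H :=
      LinearMap.mul' k H ∘ₗ LinearMap.lTensor H (antipode (R := k)) with hψ
    set ψ' : H ⊗[k] H →ₗ[k] H :=
      (LinearMap.mulRight k (antipode (R := k) y)) ∘ₗ ψ with hψ'
    have hgen : ∀ (x z : H), z ∈ S → ψ' (x ⊗ₜ[k] z) = ψ (x ⊗ₜ[k] z) := by
      intro x z hz
      simp only [hψ', hψ, LinearMap.comp_apply, LinearMap.lTensor_tmul,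
        LinearMap.mul'_apply, LinearMap.mulRight_apply]
      rw [mul_assoc, ← my_antipode_mul, hy z hz]
    have key := span_apply_eq S ψ' ψ hgen (hcoid a haS)
    have hε : ψ (Coalgebra.comul (R := k) a) =
        Coalgebra.counit (R := k) a • (1 : H) := by
      rw [hψ]
      have := HopfAlgebra.mul_antipode_lTensor_comul_apply (R := k) (A := H) a
      rw [Algebra.algebraMap_eq_smul_one] at this
      exact this
    rw [hψ'] at key
    simp only [LinearMap.comp_apply, LinearMap.mulRight_apply] at key
    rw [hε, smul_mul_assoc, one_mul] at key
    have hy1 : y = 1 := by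
      apply hS.injective
      rw [my_antipode_one]
      exact cancel _ _ key
    rw [← hy1]
    exact hyS
  · -- right unit case
    set φ : H ⊗[k] H →ₗ[k] H :=
      LinearMap.mul' k H ∘ₗ LinearMap.rTensor H (antipode (R := k)) with hφ
    set φ' : H ⊗[k] H →ₗ[k] H := (LinearMap.mulRight k y) ∘ₗ φ with hφ'
    have hgen : ∀ (x z : H), z ∈ S → φ' (x ⊗ₜ[k] z) = φ (x ⊗ₜ[k] z) := by
      intro x z hz
      simp only [hφ', hφ, LinearMap.comp_apply, LinearMap.rTensor_tmul,
        LinearMap.mul'_apply, LinearMap.mulRight_apply]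
      rw [mul_assoc, hy z hz]
    have key := span_apply_eq S φ' φ hgen (hcoid a haS)
    have hε : φ (Coalgebra.comul (R := k) a) =
        Coalgebra.counit (R := k) a • (1 : H) := by
      rw [hφ]
      have := HopfAlgebra.mul_antipode_rTensor_comul_apply (R := k) (A := H) a
      rw [Algebra.algebraMap_eq_smul_one] at this
      exact this
    rw [hφ'] at key
    simp only [LinearMap.comp_apply, LinearMap.mulRight_apply] at key
    rw [hε, smul_mul_assoc, one_mul] at key
    have hy1 : y = 1 := cancel _ _ key
    rw [← hy1]
    exact hyS
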